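/- arXiv:math/0211125 — 2 statements merged into one kernel-verified Lean document; each statement's English description precedes it below -/
import Mathlib

section
/- Let f be a monic polynomial with coefficients in a field K. The symmetric group S_n (acting on the splitting algebra K_f by permuting the universal roots) acts transitively on the set of maximal ideals of K_f. -/
open MvPolynomial Polynomial

/-- The ideal `(s₁ - f₁, ..., sₙ - fₙ)` defining the splitting algebra, where
`fᵢ = (-1)^i · coeff f (n - i)` are the signed coefficients of `f`. -/
noncomputable def splittingIdeal (A : Type*) [CommRing A] (f : Polynomial A) (n : ℕ) :
    Ideal (MvPolynomial (Fin n) A) :=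
  Ideal.span (Set.range fun i : Fin n =>
    esymm (Fin n) A ((i : ℕ) + 1) -
      MvPolynomial.C ((-1 : A) ^ ((i : ℕ) + 1) * f.coeff (n - ((i : ℕ) + 1))))

/-- The splitting algebra `A_f = A[t₁,...,tₙ]/(s₁ - f₁, ..., sₙ - fₙ)`. -/
noncomputable def SplittingAlgebra (A : Type*) [CommRing A] (f : Polynomial A) (n : ℕ) :=
  MvPolynomial (Fin n) A ⧸ splittingIdeal A f n

noncomputable instance (A : Type*) [CommRing A] (f : Polynomial A) (n : ℕ) :
    CommRing (SplittingAlgebra A f n) := Ideal.Quotient.commRing _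

noncomputable instance (R A : Type*) [CommSemiring R] [CommRing A] [Algebra R A]
    (f : Polynomial A) (n : ℕ) : Algebra R (SplittingAlgebra A f n) :=
  Ideal.Quotient.algebra R

/-- The universal roots `τᵢ` of `f` in the splitting algebra. -/
noncomputable def univRoot (A : Type*) [CommRing A] (f : Polynomial A) (n : ℕ) (i : Fin n) :
    SplittingAlgebra A f n :=
  Ideal.Quotient.mk (splittingIdeal A f n) (MvPolynomial.X i)

/-- The action of a permutation `σ` on the splitting algebra, sending `τᵢ` to `τ_{σ⁻¹ i}`. -/
noncomputable def permHom (A : Type*) [CommRing A] (f : Polynomial A) (n : ℕ)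
    (σ : Equiv.Perm (Fin n)) : SplittingAlgebra A f n →ₐ[A] SplittingAlgebra A f n :=
  Ideal.Quotient.liftₐ (splittingIdeal A f n)
    ((Ideal.Quotient.mkₐ A (splittingIdeal A f n)).comp
      (rename (σ.symm : Fin n → Fin n)))
    (by
      intro a ha
      have h : splittingIdeal A f n ≤ RingHom.ker
          ((Ideal.Quotient.mkₐ A (splittingIdeal A f n)).comp
            (rename (σ.symm : Fin n → Fin n))) := by
        rw [splittingIdeal, Ideal.span_le]
        rintro _ ⟨i, rfl⟩
        have : (rename (σ.symm : Fin n → Fin n))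
            (esymm (Fin n) A ((i : ℕ) + 1) -
              MvPolynomial.C ((-1 : A) ^ ((i : ℕ) + 1) * f.coeff (n - ((i : ℕ) + 1)))) =
            esymm (Fin n) A ((i : ℕ) + 1) -
              MvPolynomial.C ((-1 : A) ^ ((i : ℕ) + 1) * f.coeff (n - ((i : ℕ) + 1))) := by
          rw [map_sub, rename_esymm, rename_C]
        simp only [SetLike.mem_coe, RingHom.mem_ker, AlgHom.coe_comp, Function.comp_apply, this]
        rw [Ideal.Quotient.mkₐ_eq_mk, Ideal.Quotient.eq_zero_iff_mem]
        exact Ideal.subset_span ⟨i, rfl⟩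
      exact h ha)



lemma exists_comp_perm_eq {α β : Type*} [Fintype α] (g g' : α → β)
    (h : Multiset.map g Finset.univ.val = Multiset.map g' Finset.univ.val) :
    ∃ σ : Equiv.Perm α, g ∘ σ = g' := by
  classical
  have hcard : ∀ b, Fintype.card {a // g' a = b} = Fintype.card {a // g a = b} := by
    intro b
    have hc := congrArg (Multiset.count b) h
    rw [Multiset.count_map, Multiset.count_map] at hc
    rw [Fintype.card_subtype, Fintype.card_subtype, Finset.card_def, Finset.card_def,
      Finset.filter_val, Finset.filter_val]
    have e1 : Multiset.filter (fun a => g a = b) Finset.univ.val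
        = Multiset.filter (fun a => b = g a) Finset.univ.val :=
      Multiset.filter_congr (fun x _ => by constructor <;> exact Eq.symm)
    have e2 : Multiset.filter (fun a => g' a = b) Finset.univ.val
        = Multiset.filter (fun a => b = g' a) Finset.univ.val :=
      Multiset.filter_congr (fun x _ => by constructor <;> exact Eq.symm)
    rw [e1, e2, hc]
  let e : ∀ b, {a // g' a = b} ≃ {a // g a = b} := fun b => Fintype.equivOfCardEq (hcard b)
  refine ⟨(Equiv.sigmaFiberEquiv g').symm.trans
    ((Equiv.sigmaCongrRight e).trans (Equiv.sigmaFiberEquiv g)), funext fun a => ?_⟩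
  have key : ∀ x : (b : β) × {a // g a = b}, g ((Equiv.sigmaFiberEquiv g) x) = x.1 :=
    fun x => x.2.2
  simp only [Function.comp_apply, Equiv.trans_apply, key]
  rfl

lemma mkₐ_eq_aeval_univRoot (A : Type*) [CommRing A] (f : Polynomial A) (n : ℕ) :
    (Ideal.Quotient.mkₐ A (splittingIdeal A f n) : MvPolynomial (Fin n) A →ₐ[A] _)
      = MvPolynomial.aeval (univRoot A f n) := by
  rw [MvPolynomial.aeval_unique (Ideal.Quotient.mkₐ A (splittingIdeal A f n))]
  rfl

lemma prod_X_sub_univRoot {K : Type*} [Field K] (f : Polynomial K) (n : ℕ)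
    (hmonic : f.Monic) (hdeg : f.natDegree = n) :
    (∏ i : Fin n, (Polynomial.X - Polynomial.C (univRoot K f n i))) =
      f.map (algebraMap K (SplittingAlgebra K f n)) := by
  set s : Multiset (SplittingAlgebra K f n) := Finset.univ.val.map (univRoot K f n) with hs
  have hcards : Multiset.card s = n := by simp [hs]
  have hprod : (∏ i : Fin n, (Polynomial.X - Polynomial.C (univRoot K f n i)))
      = (s.map fun t => Polynomial.X - Polynomial.C t).prod := by
    rw [hs, Multiset.map_map, Finset.prod_eq_multiset_prod]
    rfl
  have hesymm : ∀ j : ℕ, 1 ≤ j → j ≤ n →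
      s.esymm j = algebraMap K (SplittingAlgebra K f n) ((-1 : K) ^ j * f.coeff (n - j)) := by
    intro j h1 h2
    have haev := MvPolynomial.aeval_esymm_eq_multiset_esymm (Fin n) K j (univRoot K f n)
    rw [hs, ← haev, ← mkₐ_eq_aeval_univRoot]
    set i : Fin n := ⟨j - 1, by omega⟩ with hi
    have hji : (i : ℕ) + 1 = j := by simp [hi]; omega
    have hmem : esymm (Fin n) K j - MvPolynomial.C ((-1 : K) ^ j * f.coeff (n - j))
        ∈ splittingIdeal K f n := by
      rw [← hji]
      exact Ideal.subset_span ⟨i, rfl⟩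
    have : Ideal.Quotient.mk (splittingIdeal K f n) (esymm (Fin n) K j)
        = Ideal.Quotient.mk (splittingIdeal K f n)
          (MvPolynomial.C ((-1 : K) ^ j * f.coeff (n - j))) :=
      (Ideal.Quotient.mk_eq_mk_iff_sub_mem _ _).mpr hmem
    exact this
  ext k
  rw [hprod, Polynomial.coeff_map]
  rcases lt_trichotomy k n with hk | rfl | hk
  · rw [Multiset.prod_X_sub_C_coeff s (by omega), hcards,
      hesymm (n - k) (by omega) (by omega)]
    have hnk : n - (n - k) = k := by omega
    rw [hnk, map_mul, ← mul_assoc, map_pow, map_neg, map_one, ← pow_add,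
      Even.neg_one_pow ⟨n - k, by ring⟩, one_mul]
  · rw [Multiset.prod_X_sub_C_coeff s (by omega), hcards, Nat.sub_self,
      show s.esymm 0 = 1 by simp [Multiset.esymm], pow_zero, one_mul, ← hdeg, hmonic.coeff_natDegree, map_one]
  · have hdegs : (s.map fun t => Polynomial.X - Polynomial.C t).prod.natDegree ≤ n := by
      refine le_trans (Polynomial.natDegree_multiset_prod_le _) ?_
      have hle : ∀ x ∈ (s.map fun t => Polynomial.X - Polynomial.C t).map
          Polynomial.natDegree, x ≤ 1 := by
        intro x hx
        simp only [Multiset.map_map, Multiset.mem_map, Function.comp_apply] at hx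
        obtain ⟨t, _, rfl⟩ := hx
        exact Polynomial.natDegree_X_sub_C_le t
      calc ((s.map fun t => Polynomial.X - Polynomial.C t).map Polynomial.natDegree).sum
          ≤ Multiset.card ((s.map fun t => Polynomial.X - Polynomial.C t).map
              Polynomial.natDegree) • 1 := Multiset.sum_le_card_nsmul _ 1 hle
        _ = n := by simp [hcards]
    rw [Polynomial.coeff_eq_zero_of_natDegree_lt (by omega),
      Polynomial.coeff_eq_zero_of_natDegree_lt (by omega), map_zero]


lemma map_prod_X_sub_univRoot {K : Type*} [Field K] (f : Polynomial K) (n : ℕ)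
    (hmonic : f.Monic) (hdeg : f.natDegree = n) {B : Type*} [CommRing B] [Algebra K B]
    (ψ : SplittingAlgebra K f n →ₐ[K] B) :
    f.map (algebraMap K B)
      = ∏ i : Fin n, (Polynomial.X - Polynomial.C (ψ (univRoot K f n i))) := by
  have h := congrArg (Polynomial.map (ψ : SplittingAlgebra K f n →+* B))
    (prod_X_sub_univRoot f n hmonic hdeg)
  rw [Polynomial.map_map, ψ.comp_algebraMap] at h
  rw [← h, Polynomial.map_prod]
  simp only [Polynomial.map_sub, Polynomial.map_X, Polynomial.map_C]
  rfl

lemma permHom_univRoot (A : Type*) [CommRing A] (f : Polynomial A) (n : ℕ)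
    (σ : Equiv.Perm (Fin n)) (i : Fin n) :
    permHom A f n σ (univRoot A f n i) = univRoot A f n (σ.symm i) := by
  have h : permHom A f n σ (Ideal.Quotient.mk (splittingIdeal A f n) (MvPolynomial.X i))
      = Ideal.Quotient.mk (splittingIdeal A f n)
          (rename (⇑σ.symm) (MvPolynomial.X i)) := rfl
  show permHom A f n σ (Ideal.Quotient.mk (splittingIdeal A f n) (MvPolynomial.X i)) = _
  rw [h, rename_X]
  rfl

lemma exists_algHom_iff_mem {K : Type*} [Field K] (f : Polynomial K) (n : ℕ)
    (hmonic : f.Monic) (hdeg : f.natDegree = n)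
    (M : Ideal (SplittingAlgebra K f n)) (hM : M.IsMaximal) :
    ∃ φ : SplittingAlgebra K f n →ₐ[K] AlgebraicClosure K, ∀ x, (φ x = 0 ↔ x ∈ M) := by
  haveI := hM
  letI : Field (SplittingAlgebra K f n ⧸ M) := Ideal.Quotient.field M
  let π : SplittingAlgebra K f n →ₐ[K] (SplittingAlgebra K f n ⧸ M) := Ideal.Quotient.mkₐ K M
  let r : Fin n → (SplittingAlgebra K f n ⧸ M) := fun i => π (univRoot K f n i)
  have hmap : f.map (algebraMap K (SplittingAlgebra K f n ⧸ M)) = ∏ i, (Polynomial.X - Polynomial.C (r i)) :=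
    map_prod_X_sub_univRoot f n hmonic hdeg π
  have hint : ∀ i, IsIntegral K (r i) := by
    intro i
    refine ⟨f, hmonic, ?_⟩
    have heval : Polynomial.eval₂ (algebraMap K (SplittingAlgebra K f n ⧸ M)) (r i) f
        = Polynomial.eval (r i) (f.map (algebraMap K (SplittingAlgebra K f n ⧸ M))) := (Polynomial.eval_map _ _).symm
    rw [heval, hmap, Polynomial.eval_prod]
    exact Finset.prod_eq_zero (Finset.mem_univ i) (by simp)
  have hadj : Algebra.adjoin K (Set.range r) = ⊤ := by
    let ψ := π.comp (Ideal.Quotient.mkₐ K (splittingIdeal K f n))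
    have hψ : Function.Surjective ψ :=
      (Ideal.Quotient.mkₐ_surjective K M).comp (Ideal.Quotient.mkₐ_surjective K _)
    have hr : Set.range r = ψ '' Set.range MvPolynomial.X := by
      rw [← Set.range_comp]; rfl
    rw [hr, ← AlgHom.map_adjoin, MvPolynomial.adjoin_range_X, Algebra.map_top,
      AlgHom.range_eq_top]
    exact hψ
  haveI : Module.Finite K (SplittingAlgebra K f n ⧸ M) := by
    have hfg := fg_adjoin_of_finite (Set.finite_range r)
      (by rintro x ⟨i, rfl⟩; exact hint i)
    rw [hadj] at hfg
    exact ⟨by simpa using hfg⟩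
  haveI := Algebra.IsIntegral.of_finite K (SplittingAlgebra K f n ⧸ M)
  haveI : NoZeroSMulDivisors K (SplittingAlgebra K f n ⧸ M) :=
    ⟨fun {c x} h => by rw [Algebra.smul_def, mul_eq_zero, map_eq_zero] at h; exact h⟩
  let emb : (SplittingAlgebra K f n ⧸ M) →ₐ[K] AlgebraicClosure K := IsAlgClosed.lift
  refine ⟨emb.comp π, fun x => ?_⟩
  rw [AlgHom.comp_apply,
    map_eq_zero_iff emb (RingHom.injective (emb : (SplittingAlgebra K f n ⧸ M) →+* AlgebraicClosure K))]
  exact Ideal.Quotient.eq_zero_iff_mem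

/-- For a monic polynomial `f` over a field `K`, the symmetric group `Sₙ` acts transitively
on the maximal ideals of the splitting algebra `K_f`. -/
theorem symmetricGroup_transitive_on_maximalIdeals {K : Type*} [Field K]
    (f : Polynomial K) (n : ℕ) (hmonic : f.Monic) (hdeg : f.natDegree = n) :
    ∀ M M' : Ideal (SplittingAlgebra K f n), M.IsMaximal → M'.IsMaximal →
      ∃ σ : Equiv.Perm (Fin n), Ideal.comap (permHom K f n σ) M = M' := by
  intro M M' hM hM'
  obtain ⟨φ, hφ⟩ := exists_algHom_iff_mem f n hmonic hdeg M hM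
  obtain ⟨φ', hφ'⟩ := exists_algHom_iff_mem f n hmonic hdeg M' hM'
  -- the two root systems agree as multisets
  have hms : Multiset.map (fun i => φ (univRoot K f n i)) Finset.univ.val
      = Multiset.map (fun i => φ' (univRoot K f n i)) Finset.univ.val := by
    have key : ∀ ψ : SplittingAlgebra K f n →ₐ[K] AlgebraicClosure K,
        (f.map (algebraMap K (AlgebraicClosure K))).roots
          = Multiset.map (fun i => ψ (univRoot K f n i)) Finset.univ.val := by
      intro ψ
      have hmm : Multiset.map (fun i => Polynomial.X - Polynomial.C (ψ (univRoot K f n i)))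
          Finset.univ.val
          = Multiset.map (fun t => Polynomial.X - Polynomial.C t)
              (Multiset.map (fun i => ψ (univRoot K f n i)) Finset.univ.val) :=
        by rw [Multiset.map_map]; rfl
      rw [map_prod_X_sub_univRoot f n hmonic hdeg ψ, Finset.prod_eq_multiset_prod, hmm,
        Polynomial.roots_multiset_prod_X_sub_C]
    rw [← key φ, ← key φ']
  obtain ⟨σ0, hσ0⟩ := exists_comp_perm_eq _ _ hms
  refine ⟨σ0⁻¹, ?_⟩
  have hcomp : φ.comp (permHom K f n σ0⁻¹) = φ' := by
    have hext : (φ.comp (permHom K f n σ0⁻¹)).comp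
          (Ideal.Quotient.mkₐ K (splittingIdeal K f n))
        = φ'.comp (Ideal.Quotient.mkₐ K (splittingIdeal K f n)) := by
      apply MvPolynomial.algHom_ext
      intro i
      show φ (permHom K f n σ0⁻¹ (univRoot K f n i)) = φ' (univRoot K f n i)
      rw [permHom_univRoot]
      have := congrFun hσ0 i
      simpa [Equiv.Perm.inv_def] using this
    ext x
    obtain ⟨p, rfl⟩ := Ideal.Quotient.mkₐ_surjective K (splittingIdeal K f n) x
    exact DFunLike.congr_fun hext p
  ext x
  rw [Ideal.mem_comap, ← hφ, ← hφ', ← hcomp]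
  rfl
end

section
/- Let K be a field of characteristic 3, K(s) the rational function field, and f(t) = t^3 - s. In the splitting algebra K(s)_f with universal roots τ_1, τ_2, τ_3, one has (τ_i - τ_j)^2 = 0 for all i, j; the ideal I generated by the differences τ_i - τ_j is the unique maximal ideal of K(s)_f; I is stable under the S_3-action; and S_3 acts trivially on the residue field K(s)_f/I, even though this residue field is the (purely inseparable, degree 3) splitting field of t^3 - s over K(s) and the inclusion K(s) → K(s)_f/I is not surjective. -/
open MvPolynomial Polynomial

namespace InsepAux

lemma esymm3_1 (A : Type*) [CommRing A] : esymm (Fin 3) A 1 = X 0 + X 1 + X 2 := by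
  rw [esymm_one, Fin.sum_univ_three]

lemma esymm3_2 (A : Type*) [CommRing A] :
    esymm (Fin 3) A 2 = X 0 * X 1 + X 0 * X 2 + X 1 * X 2 := by
  have h : Finset.powersetCard 2 (Finset.univ : Finset (Fin 3)) =
      {({0,1} : Finset (Fin 3)), {0,2}, {1,2}} := by decide
  rw [esymm, h]
  rw [show ({({0,1} : Finset (Fin 3)), {0,2}, {1,2}} : Finset (Finset (Fin 3))) =
    insert {0,1} (insert {0,2} {({1,2} : Finset (Fin 3))}) from rfl]
  rw [Finset.sum_insert (by decide), Finset.sum_insert (by decide), Finset.sum_singleton,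
      Finset.prod_pair (by decide), Finset.prod_pair (by decide), Finset.prod_pair (by decide)]
  ring

lemma esymm3_3 (A : Type*) [CommRing A] : esymm (Fin 3) A 3 = X 0 * X 1 * X 2 := by
  have h : Finset.powersetCard 3 (Finset.univ : Finset (Fin 3)) =
      {({0,1,2} : Finset (Fin 3))} := by decide
  rw [esymm, h, Finset.sum_singleton]
  rw [show ({0,1,2} : Finset (Fin 3)) = insert 0 (insert 1 {2}) from rfl]
  rw [Finset.prod_insert (by decide), Finset.prod_insert (by decide), Finset.prod_singleton,
      mul_assoc]

lemma diff_sq_poly (A : Type*) [CommRing A] (i j : Fin 3) (hij : i ≠ j) :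
    (X i - X j : MvPolynomial (Fin 3) A) ^ 2 + 3 * (X i * X j)
      = esymm (Fin 3) A 1 * (X i + X j) - esymm (Fin 3) A 2 := by
  rw [esymm3_1, esymm3_2]
  fin_cases i <;> fin_cases j <;>
    first
      | exact absurd rfl hij
      | (simp only [Fin.zero_eta, Fin.mk_one, show (⟨2, by norm_num⟩ : Fin 3) = 2 from rfl]; ring)

variable {K : Type*} [Field K] [CharP K 3]

lemma three_rat : (3 : RatFunc K) = 0 := by
  haveI : CharP (RatFunc K) 3 :=
    charP_of_injective_algebraMap (algebraMap K (RatFunc K)).injective 3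
  calc (3 : RatFunc K) = ((3 : ℕ) : RatFunc K) := by norm_cast
  _ = 0 := CharP.cast_eq_zero _ 3

lemma three_alg {R : Type*} [CommRing R] [Algebra (RatFunc K) R] : (3 : R) = 0 := by
  rw [show (3 : R) = algebraMap (RatFunc K) R 3 from (map_ofNat _ 3).symm, three_rat, map_zero]

lemma cube_ne (b : RatFunc K) : b ^ 3 ≠ RatFunc.X := by
  intro h
  rcases eq_or_ne b 0 with rfl | hb
  · exact RatFunc.X_ne_zero (by simpa using h.symm)
  · have h3 : b ^ 3 = b * b * b := by ring
    have := congrArg RatFunc.intDegree h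
    rw [RatFunc.intDegree_X, h3, RatFunc.intDegree_mul (mul_ne_zero hb hb) hb,
        RatFunc.intDegree_mul hb hb] at this
    omega

lemma irr : Irreducible (Polynomial.X ^ 3 - Polynomial.C RatFunc.X : Polynomial (RatFunc K)) :=
  X_pow_sub_C_irreducible_of_prime (by norm_num) cube_ne

end InsepAux

section
namespace InsepAux
variable {K : Type*} [Field K] [CharP K 3] {f : Polynomial (RatFunc K)}

lemma gen_mem (f : Polynomial (RatFunc K)) (i : Fin 3) :
    esymm (Fin 3) (RatFunc K) ((i : ℕ) + 1) -
      MvPolynomial.C ((-1 : RatFunc K) ^ ((i : ℕ) + 1) * f.coeff (3 - ((i : ℕ) + 1)))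
      ∈ splittingIdeal (RatFunc K) f 3 :=
  Ideal.subset_span ⟨i, rfl⟩

lemma mem1 (hf : f = Polynomial.X ^ 3 - Polynomial.C RatFunc.X) :
    esymm (Fin 3) (RatFunc K) 1 ∈ splittingIdeal (RatFunc K) f 3 := by
  simpa [hf, Polynomial.coeff_X_pow] using gen_mem f 0

lemma mem2 (hf : f = Polynomial.X ^ 3 - Polynomial.C RatFunc.X) :
    esymm (Fin 3) (RatFunc K) 2 ∈ splittingIdeal (RatFunc K) f 3 := by
  simpa [hf, Polynomial.coeff_X_pow] using gen_mem f 1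

lemma mem3 (hf : f = Polynomial.X ^ 3 - Polynomial.C RatFunc.X) :
    esymm (Fin 3) (RatFunc K) 3 - MvPolynomial.C RatFunc.X ∈ splittingIdeal (RatFunc K) f 3 := by
  simpa [hf, Polynomial.coeff_X_pow, show ((-1 : RatFunc K)) ^ 3 = -1 by ring, neg_one_mul,
    sub_eq_add_neg] using gen_mem f 2

end InsepAux
end

section
namespace InsepAux
variable {K : Type*} [Field K] [CharP K 3]

lemma root_cube :
    (AdjoinRoot.root (Polynomial.X ^ 3 - Polynomial.C RatFunc.X : Polynomial (RatFunc K))) ^ 3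
      = algebraMap (RatFunc K) _ RatFunc.X := by
  have h := AdjoinRoot.mk_self
    (f := (Polynomial.X ^ 3 - Polynomial.C RatFunc.X : Polynomial (RatFunc K)))
  rw [← AdjoinRoot.aeval_eq, map_sub, map_pow, Polynomial.aeval_X, Polynomial.aeval_C] at h
  exact sub_eq_zero.mp h

variable (f : Polynomial (RatFunc K))

noncomputable def idl : Ideal (SplittingAlgebra (RatFunc K) f 3) :=
  Ideal.span {x | ∃ i j : Fin 3, x = univRoot (RatFunc K) f 3 i - univRoot (RatFunc K) f 3 j}

lemma diff_mem (i j : Fin 3) :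
    univRoot (RatFunc K) f 3 i - univRoot (RatFunc K) f 3 j ∈ idl f :=
  Ideal.subset_span ⟨i, j, rfl⟩

variable {f}

lemma diff_sq_mem (hf : f = Polynomial.X ^ 3 - Polynomial.C RatFunc.X) (i j : Fin 3) :
    (MvPolynomial.X i - MvPolynomial.X j : MvPolynomial (Fin 3) (RatFunc K)) ^ 2
      ∈ splittingIdeal (RatFunc K) f 3 := by
  rcases eq_or_ne i j with rfl | hij
  · simpa using Ideal.zero_mem _
  · have h3 : (3 : MvPolynomial (Fin 3) (RatFunc K)) = 0 := three_alg (K := K)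
    have key := diff_sq_poly (RatFunc K) i j hij
    rw [h3, zero_mul, add_zero] at key
    rw [key]
    exact Ideal.sub_mem _ (Ideal.mul_mem_right _ _ (mem1 hf)) (mem2 hf)

lemma sq_zero (hf : f = Polynomial.X ^ 3 - Polynomial.C RatFunc.X) (i j : Fin 3) :
    (univRoot (RatFunc K) f 3 i - univRoot (RatFunc K) f 3 j) ^ 2 = 0 := by
  show (Ideal.Quotient.mk (splittingIdeal (RatFunc K) f 3) (MvPolynomial.X i)
    - Ideal.Quotient.mk (splittingIdeal (RatFunc K) f 3) (MvPolynomial.X j)) ^ 2 = 0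
  rw [← map_sub]; refine (map_pow (Ideal.Quotient.mk _) _ 2).symm.trans (Ideal.Quotient.eq_zero_iff_mem.mpr ?_)
  exact diff_sq_mem hf i j

lemma permHom_univRoot (f : Polynomial (RatFunc K)) (σ : Equiv.Perm (Fin 3)) (i : Fin 3) :
    permHom (RatFunc K) f 3 σ (univRoot (RatFunc K) f 3 i)
      = univRoot (RatFunc K) f 3 (σ.symm i) := by
  show Ideal.Quotient.mk (splittingIdeal (RatFunc K) f 3)
      (rename (σ.symm : Fin 3 → Fin 3) (MvPolynomial.X i)) = _
  rw [rename_X]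
  rfl

lemma aeval_gen (hf : f = Polynomial.X ^ 3 - Polynomial.C RatFunc.X) (i : Fin 3) :
    (MvPolynomial.aeval fun _ : Fin 3 =>
        AdjoinRoot.root (Polynomial.X ^ 3 - Polynomial.C RatFunc.X : Polynomial (RatFunc K)))
      (esymm (Fin 3) (RatFunc K) ((i : ℕ) + 1) -
        MvPolynomial.C ((-1 : RatFunc K) ^ ((i : ℕ) + 1) * f.coeff (3 - ((i : ℕ) + 1)))) = 0 := by
  have h3 : (3 : AdjoinRoot (Polynomial.X ^ 3 - Polynomial.C RatFunc.X : Polynomial (RatFunc K)))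
      = 0 := three_alg (K := K)
  fin_cases i
  · show (MvPolynomial.aeval _) (esymm (Fin 3) (RatFunc K) 1
      - MvPolynomial.C ((-1 : RatFunc K) ^ 1 * f.coeff 2)) = 0
    rw [hf]
    norm_num [esymm3_1, Polynomial.coeff_X_pow]
    linear_combination (AdjoinRoot.root
      (Polynomial.X ^ 3 - Polynomial.C RatFunc.X : Polynomial (RatFunc K))) * h3
  · show (MvPolynomial.aeval _) (esymm (Fin 3) (RatFunc K) 2
      - MvPolynomial.C ((-1 : RatFunc K) ^ 2 * f.coeff 1)) = 0
    rw [hf]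
    norm_num [esymm3_2, Polynomial.coeff_X_pow]
    linear_combination (AdjoinRoot.root
      (Polynomial.X ^ 3 - Polynomial.C RatFunc.X : Polynomial (RatFunc K))) ^ 2 * h3
  · show (MvPolynomial.aeval _) (esymm (Fin 3) (RatFunc K) 3
      - MvPolynomial.C ((-1 : RatFunc K) ^ 3 * f.coeff 0)) = 0
    rw [hf]
    norm_num [esymm3_3, Polynomial.coeff_X_pow, AdjoinRoot.algebraMap_eq]
    have hc := root_cube (K := K)
    rw [AdjoinRoot.algebraMap_eq] at hc
    linear_combination hc

noncomputable def phi1 (hf : f = Polynomial.X ^ 3 - Polynomial.C RatFunc.X) :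
    SplittingAlgebra (RatFunc K) f 3 →ₐ[RatFunc K]
      AdjoinRoot (Polynomial.X ^ 3 - Polynomial.C RatFunc.X : Polynomial (RatFunc K)) :=
  Ideal.Quotient.liftₐ _
    (MvPolynomial.aeval fun _ : Fin 3 =>
      AdjoinRoot.root (Polynomial.X ^ 3 - Polynomial.C RatFunc.X : Polynomial (RatFunc K)))
    (by
      intro a ha
      rw [show a ∈ splittingIdeal (RatFunc K) f 3 ↔ a ∈ splittingIdeal (RatFunc K) f 3 from
        Iff.rfl] at ha
      induction ha using Submodule.span_induction with
      | mem x hx =>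
        obtain ⟨i, rfl⟩ := hx
        exact aeval_gen hf i
      | zero => simp
      | add x y _ _ hx hy => simp [hx, hy]
      | smul a x _ hx => simp [smul_eq_mul, hx]
      )

lemma phi1_mk (hf : f = Polynomial.X ^ 3 - Polynomial.C RatFunc.X)
    (p : MvPolynomial (Fin 3) (RatFunc K)) :
    phi1 hf (Ideal.Quotient.mk (splittingIdeal (RatFunc K) f 3) p)
      = (MvPolynomial.aeval fun _ : Fin 3 =>
          AdjoinRoot.root (Polynomial.X ^ 3 - Polynomial.C RatFunc.X : Polynomial (RatFunc K)))
        p := rfl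

noncomputable def phi2 (hf : f = Polynomial.X ^ 3 - Polynomial.C RatFunc.X) :
    (SplittingAlgebra (RatFunc K) f 3 ⧸ idl f) →ₐ[RatFunc K]
      AdjoinRoot (Polynomial.X ^ 3 - Polynomial.C RatFunc.X : Polynomial (RatFunc K)) :=
  Ideal.Quotient.liftₐ _ (phi1 hf)
    (by
      intro a ha
      induction ha using Submodule.span_induction with
      | mem x hx =>
        obtain ⟨i, j, rfl⟩ := hx
        rw [map_sub]
        show phi1 hf (Ideal.Quotient.mk _ (MvPolynomial.X i))
          - phi1 hf (Ideal.Quotient.mk _ (MvPolynomial.X j)) = 0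
        rw [phi1_mk hf, phi1_mk hf, MvPolynomial.aeval_X, MvPolynomial.aeval_X, sub_self]
      | zero => simp
      | add x y _ _ hx hy => simp [hx, hy]
      | smul a x _ hx => simp [smul_eq_mul, hx]
      )

end InsepAux
end

section
namespace InsepAux
variable {K : Type*} [Field K] [CharP K 3] {f : Polynomial (RatFunc K)}

noncomputable def c0 (f : Polynomial (RatFunc K)) :
    SplittingAlgebra (RatFunc K) f 3 ⧸ idl f :=
  Ideal.Quotient.mk (idl f) (univRoot (RatFunc K) f 3 0)

lemma c0_cube (hf : f = Polynomial.X ^ 3 - Polynomial.C RatFunc.X) :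
    c0 f ^ 3 = algebraMap (RatFunc K) _ RatFunc.X := by
  have key : (MvPolynomial.X 0 : MvPolynomial (Fin 3) (RatFunc K)) ^ 3 - MvPolynomial.C RatFunc.X
      = MvPolynomial.X 0 ^ 2 * (MvPolynomial.X 0 - MvPolynomial.X 1)
        + MvPolynomial.X 0 * MvPolynomial.X 1 * (MvPolynomial.X 0 - MvPolynomial.X 2)
        + (esymm (Fin 3) (RatFunc K) 3 - MvPolynomial.C RatFunc.X) := by
    rw [esymm3_3]; ring
  have keyB := congrArg (Ideal.Quotient.mk (splittingIdeal (RatFunc K) f 3)) key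
  have hz : Ideal.Quotient.mk (splittingIdeal (RatFunc K) f 3)
      (esymm (Fin 3) (RatFunc K) 3 - MvPolynomial.C RatFunc.X) = 0 :=
    Ideal.Quotient.eq_zero_iff_mem.mpr (mem3 hf)
  simp only [map_sub, map_add, map_mul, map_pow] at keyB hz
  have keyB2 : Ideal.Quotient.mk (splittingIdeal (RatFunc K) f 3) (MvPolynomial.X 0) ^ 3
        - Ideal.Quotient.mk (splittingIdeal (RatFunc K) f 3) (MvPolynomial.C RatFunc.X)
      = Ideal.Quotient.mk (splittingIdeal (RatFunc K) f 3) (MvPolynomial.X 0) ^ 2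
          * (Ideal.Quotient.mk (splittingIdeal (RatFunc K) f 3) (MvPolynomial.X 0)
            - Ideal.Quotient.mk (splittingIdeal (RatFunc K) f 3) (MvPolynomial.X 1))
        + Ideal.Quotient.mk (splittingIdeal (RatFunc K) f 3) (MvPolynomial.X 0)
          * Ideal.Quotient.mk (splittingIdeal (RatFunc K) f 3) (MvPolynomial.X 1)
          * (Ideal.Quotient.mk (splittingIdeal (RatFunc K) f 3) (MvPolynomial.X 0)
            - Ideal.Quotient.mk (splittingIdeal (RatFunc K) f 3) (MvPolynomial.X 2)) := by
    linear_combination keyB + hz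
  have d1 : Ideal.Quotient.mk (idl f)
      (Ideal.Quotient.mk (splittingIdeal (RatFunc K) f 3) (MvPolynomial.X 0)
        - Ideal.Quotient.mk (splittingIdeal (RatFunc K) f 3) (MvPolynomial.X 1)) = 0 :=
    Ideal.Quotient.eq_zero_iff_mem.mpr (diff_mem f 0 1)
  have d2 : Ideal.Quotient.mk (idl f)
      (Ideal.Quotient.mk (splittingIdeal (RatFunc K) f 3) (MvPolynomial.X 0)
        - Ideal.Quotient.mk (splittingIdeal (RatFunc K) f 3) (MvPolynomial.X 2)) = 0 :=
    Ideal.Quotient.eq_zero_iff_mem.mpr (diff_mem f 0 2)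
  rw [← sub_eq_zero]
  show Ideal.Quotient.mk (idl f)
      (Ideal.Quotient.mk (splittingIdeal (RatFunc K) f 3) (MvPolynomial.X 0)) ^ 3
    - Ideal.Quotient.mk (idl f)
      (Ideal.Quotient.mk (splittingIdeal (RatFunc K) f 3) (MvPolynomial.C RatFunc.X)) = 0
  erw [← map_pow, ← map_sub, keyB2, map_add, map_mul, map_mul, d1, d2, mul_zero, mul_zero,
    add_zero]

lemma psi_root_aux (hf : f = Polynomial.X ^ 3 - Polynomial.C RatFunc.X) :
    (Polynomial.aeval (c0 f))
      (Polynomial.X ^ 3 - Polynomial.C RatFunc.X : Polynomial (RatFunc K)) = 0 := by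
  rw [map_sub, map_pow, Polynomial.aeval_X, Polynomial.aeval_C, c0_cube hf, sub_self]

noncomputable def psi (hf : f = Polynomial.X ^ 3 - Polynomial.C RatFunc.X) :
    AdjoinRoot (Polynomial.X ^ 3 - Polynomial.C RatFunc.X : Polynomial (RatFunc K))
      →ₐ[RatFunc K] (SplittingAlgebra (RatFunc K) f 3 ⧸ idl f) :=
  AdjoinRoot.liftAlgHom _ (Algebra.ofId _ _) (c0 f) (psi_root_aux hf)

lemma mkI_univRoot_eq (f : Polynomial (RatFunc K)) (i j : Fin 3) :
    Ideal.Quotient.mk (idl f) (univRoot (RatFunc K) f 3 i)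
      = Ideal.Quotient.mk (idl f) (univRoot (RatFunc K) f 3 j) :=
  Ideal.Quotient.eq.mpr (diff_mem f i j)

noncomputable def resEquiv (hf : f = Polynomial.X ^ 3 - Polynomial.C RatFunc.X) :
    (SplittingAlgebra (RatFunc K) f 3 ⧸ idl f) ≃ₐ[RatFunc K]
      AdjoinRoot (Polynomial.X ^ 3 - Polynomial.C RatFunc.X : Polynomial (RatFunc K)) :=
  AlgEquiv.ofAlgHom (phi2 hf) (psi hf)
    (by
      apply AdjoinRoot.algHom_ext
      rw [AlgHom.comp_apply, AlgHom.id_apply]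
      rw [psi]; erw [AdjoinRoot.liftAlgHom_root]
      show (MvPolynomial.aeval fun _ : Fin 3 => AdjoinRoot.root
          (Polynomial.X ^ 3 - Polynomial.C RatFunc.X : Polynomial (RatFunc K)))
        (MvPolynomial.X 0) = _
      rw [MvPolynomial.aeval_X])
    (by
      apply Ideal.Quotient.algHom_ext
      apply Ideal.Quotient.algHom_ext
      apply MvPolynomial.algHom_ext
      intro i
      show psi hf (phi2 hf (Ideal.Quotient.mk (idl f)
          (Ideal.Quotient.mk (splittingIdeal (RatFunc K) f 3) (MvPolynomial.X i))))
        = Ideal.Quotient.mk (idl f)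
          (Ideal.Quotient.mk (splittingIdeal (RatFunc K) f 3) (MvPolynomial.X i))
      have hstep : phi2 hf (Ideal.Quotient.mk (idl f)
          (Ideal.Quotient.mk (splittingIdeal (RatFunc K) f 3) (MvPolynomial.X i)))
          = AdjoinRoot.root (Polynomial.X ^ 3 - Polynomial.C RatFunc.X : Polynomial (RatFunc K)) := by
        show (MvPolynomial.aeval fun _ : Fin 3 => AdjoinRoot.root
            (Polynomial.X ^ 3 - Polynomial.C RatFunc.X : Polynomial (RatFunc K)))
          (MvPolynomial.X i) = _
        rw [MvPolynomial.aeval_X]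
      rw [hstep]
      rw [psi]; erw [AdjoinRoot.liftAlgHom_root]
      exact mkI_univRoot_eq f 0 i)

end InsepAux
end

section
namespace InsepAux
variable {K : Type*} [Field K] [CharP K 3] {f : Polynomial (RatFunc K)}

lemma cube_expand {R : Type*} [CommRing R] (h3 : (3 : R) = 0) (x y : R) :
    x ^ 3 - y ^ 3 = (x - y) ^ 3 := by
  linear_combination (x ^ 2 * y - x * y ^ 2) * h3

lemma idl_isMaximal (hf : f = Polynomial.X ^ 3 - Polynomial.C RatFunc.X) :
    (idl f).IsMaximal := by
  haveI := Fact.mk (irr (K := K))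
  exact Ideal.Quotient.maximal_of_isField _
    (MulEquiv.isField (Field.toIsField _) (resEquiv hf).toMulEquiv)

lemma finrank_adjoin : Module.finrank (RatFunc K)
    (AdjoinRoot (Polynomial.X ^ 3 - Polynomial.C RatFunc.X : Polynomial (RatFunc K))) = 3 := by
  haveI := Fact.mk (irr (K := K))
  have hg : (Polynomial.X ^ 3 - Polynomial.C RatFunc.X : Polynomial (RatFunc K)) ≠ 0 :=
    (irr (K := K)).ne_zero
  rw [PowerBasis.finrank (AdjoinRoot.powerBasis hg)]
  show (Polynomial.X ^ 3 - Polynomial.C RatFunc.X : Polynomial (RatFunc K)).natDegree = 3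
  rw [Polynomial.natDegree_X_pow_sub_C]

lemma finrank_res (hf : f = Polynomial.X ^ 3 - Polynomial.C RatFunc.X) :
    Module.finrank (RatFunc K) (SplittingAlgebra (RatFunc K) f 3 ⧸ idl f) = 3 := by
  rw [(resEquiv hf).toLinearEquiv.finrank_eq]
  exact finrank_adjoin

lemma not_surj (hf : f = Polynomial.X ^ 3 - Polynomial.C RatFunc.X) :
    ¬ Function.Surjective
      (algebraMap (RatFunc K) (SplittingAlgebra (RatFunc K) f 3 ⧸ idl f)) := by
  intro hs
  obtain ⟨b, hb⟩ := hs (c0 f)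
  have hinj : Function.Injective
      (algebraMap (RatFunc K) (SplittingAlgebra (RatFunc K) f 3 ⧸ idl f)) := by
    haveI := Fact.mk (irr (K := K))
    intro x y hxy
    have h := congrArg (resEquiv hf) hxy
    rw [AlgEquiv.commutes, AlgEquiv.commutes] at h
    exact (algebraMap (RatFunc K)
      (AdjoinRoot (Polynomial.X ^ 3 - Polynomial.C RatFunc.X : Polynomial (RatFunc K)))).injective h
  apply cube_ne b
  apply hinj
  rw [map_pow, hb, c0_cube hf]

lemma perm_sub_mem (σ : Equiv.Perm (Fin 3)) (x : SplittingAlgebra (RatFunc K) f 3) :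
    permHom (RatFunc K) f 3 σ x - x ∈ idl f := by
  have key : (Ideal.Quotient.mkₐ (RatFunc K) (idl f)).comp (permHom (RatFunc K) f 3 σ)
      = Ideal.Quotient.mkₐ (RatFunc K) (idl f) := by
    apply Ideal.Quotient.algHom_ext
    apply MvPolynomial.algHom_ext
    intro i
    show Ideal.Quotient.mk (idl f) (permHom (RatFunc K) f 3 σ (univRoot (RatFunc K) f 3 i))
      = Ideal.Quotient.mk (idl f) (univRoot (RatFunc K) f 3 i)
    rw [permHom_univRoot]
    exact mkI_univRoot_eq f _ i
  have hx : Ideal.Quotient.mk (idl f) (permHom (RatFunc K) f 3 σ x)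
      = Ideal.Quotient.mk (idl f) x := by
    have h := congrArg (fun g : SplittingAlgebra (RatFunc K) f 3 →ₐ[RatFunc K]
        (SplittingAlgebra (RatFunc K) f 3 ⧸ idl f) => g x) key
    simpa using h
  exact Ideal.Quotient.eq.mp hx

lemma comap_eq (hf : f = Polynomial.X ^ 3 - Polynomial.C RatFunc.X) (σ : Equiv.Perm (Fin 3)) :
    Ideal.comap (permHom (RatFunc K) f 3 σ) (idl f) = idl f := by
  have hle : idl f ≤ Ideal.comap (permHom (RatFunc K) f 3 σ) (idl f) := by
    rw [idl, Ideal.span_le]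
    rintro _ ⟨i, j, rfl⟩
    simp only [SetLike.mem_coe, Ideal.mem_comap, map_sub]
    rw [permHom_univRoot, permHom_univRoot]
    exact diff_mem f _ _
  have hne : Ideal.comap (permHom (RatFunc K) f 3 σ) (idl f) ≠ ⊤ := by
    intro h
    have h1 : permHom (RatFunc K) f 3 σ 1 ∈ idl f := by
      rw [← Ideal.mem_comap, h]; trivial
    rw [map_one] at h1
    exact (idl_isMaximal hf).ne_top ((Ideal.eq_top_iff_one _).mpr h1)
  exact ((idl_isMaximal hf).eq_of_le hne hle).symm

lemma unique_max (hf : f = Polynomial.X ^ 3 - Polynomial.C RatFunc.X)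
    (M : Ideal (SplittingAlgebra (RatFunc K) f 3)) (hM : M.IsMaximal) : M = idl f := by
  have hle : idl f ≤ M := by
    rw [idl, Ideal.span_le]
    rintro _ ⟨i, j, rfl⟩
    have h2 : (univRoot (RatFunc K) f 3 i - univRoot (RatFunc K) f 3 j) ^ 2 ∈ M := by
      rw [sq_zero hf]; exact M.zero_mem
    exact hM.isPrime.mem_of_pow_mem _ h2
  exact ((idl_isMaximal hf).eq_of_le hM.ne_top hle).symm

set_option maxHeartbeats 1000000 in
lemma map_splits (hf : f = Polynomial.X ^ 3 - Polynomial.C RatFunc.X) :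
    f.map (algebraMap (RatFunc K) (SplittingAlgebra (RatFunc K) f 3 ⧸ idl f))
      = ∏ _i : Fin 3, (Polynomial.X - Polynomial.C (c0 f)) := by
  rw [Finset.prod_const, Finset.card_univ, Fintype.card_fin,
    congrArg (Polynomial.map
      (algebraMap (RatFunc K) (SplittingAlgebra (RatFunc K) f 3 ⧸ idl f))) hf]
  rw [Polynomial.map_sub, Polynomial.map_pow, Polynomial.map_X, Polynomial.map_C]
  have h3P : (3 : Polynomial (SplittingAlgebra (RatFunc K) f 3 ⧸ idl f)) = 0 := by
    rw [show (3 : Polynomial (SplittingAlgebra (RatFunc K) f 3 ⧸ idl f))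
      = Polynomial.C (3 : SplittingAlgebra (RatFunc K) f 3 ⧸ idl f) from
        (map_ofNat Polynomial.C 3).symm, three_alg (K := K), map_zero]
  have hCc := congrArg Polynomial.C (c0_cube hf)
  rw [map_pow] at hCc
  have hgoal : Polynomial.X ^ 3 - Polynomial.C (c0 f) ^ 3
      = (Polynomial.X - Polynomial.C (c0 f)) ^ 3 :=
    cube_expand h3P _ _
  have hsub := congrArg (fun t => Polynomial.X ^ 3 - t) hCc
  exact hsub.symm.trans hgoal

end InsepAux
end
/-- Let `K` have characteristic 3 and `f(t) = t³ - s` over `K(s)`. In the splitting algebra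
`K(s)_f`: the differences of universal roots square to zero; the ideal `I` they generate is
the unique maximal ideal; `I` is `S₃`-stable; `S₃` acts trivially on the residue field
`K(s)_f/I`, although that residue field is the degree-3 splitting field of `t³ - s` and
properly contains `K(s)`. -/
theorem inseparable_cubic_example {K : Type*} [Field K] [CharP K 3]
    (f : Polynomial (RatFunc K)) (hf : f = Polynomial.X ^ 3 - Polynomial.C RatFunc.X)
    (I : Ideal (SplittingAlgebra (RatFunc K) f 3))
    (hI : I = Ideal.span
      {x | ∃ i j : Fin 3, x = univRoot (RatFunc K) f 3 i - univRoot (RatFunc K) f 3 j}) :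
    (∀ i j : Fin 3, (univRoot (RatFunc K) f 3 i - univRoot (RatFunc K) f 3 j) ^ 2 = 0) ∧
    I.IsMaximal ∧
    (∀ M : Ideal (SplittingAlgebra (RatFunc K) f 3), M.IsMaximal → M = I) ∧
    (∀ σ : Equiv.Perm (Fin 3), Ideal.comap (permHom (RatFunc K) f 3 σ) I = I) ∧
    (∀ (σ : Equiv.Perm (Fin 3)) (x : SplittingAlgebra (RatFunc K) f 3),
      permHom (RatFunc K) f 3 σ x - x ∈ I) ∧
    (∃ c : Fin 3 → SplittingAlgebra (RatFunc K) f 3 ⧸ I,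
      f.map (algebraMap (RatFunc K) (SplittingAlgebra (RatFunc K) f 3 ⧸ I)) =
        ∏ i : Fin 3, (Polynomial.X - Polynomial.C (c i))) ∧
    Module.finrank (RatFunc K) (SplittingAlgebra (RatFunc K) f 3 ⧸ I) = 3 ∧
    ¬ Function.Surjective
        (algebraMap (RatFunc K) (SplittingAlgebra (RatFunc K) f 3 ⧸ I)) := by

  have hIdl : I = InsepAux.idl f := hI
  subst hIdl
  refine ⟨fun i j => InsepAux.sq_zero hf i j,
    InsepAux.idl_isMaximal hf,
    fun M hM => InsepAux.unique_max hf M hM,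
    fun σ => InsepAux.comap_eq hf σ,
    fun σ x => InsepAux.perm_sub_mem σ x,
    ⟨fun _ => InsepAux.c0 f, InsepAux.map_splits hf⟩,
    InsepAux.finrank_res hf,
    InsepAux.not_surj hf⟩
end
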